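/- The category Rel of sets and relations, with tensor given by disjoint union, is a symmetric traced category: for a relation R ⊆ (A + X) × (B + X), defining Tr^X(R) = {(a,b) : ∃ n ≥ 0, ∃ x₁,…,xₙ ∈ X with a R x₁ R x₂ R … R xₙ R b} yields an operation satisfying tightening (naturality in A and B), sliding (dinaturality in X), vanishing (Tr^∅ R = R and Tr^{X+Y} R = Tr^X(Tr^Y R)), strength (Tr^X(S + R) = S + Tr^X R), and yanking (Tr^X of the symmetry on X + X is the identity on X). -/

import Mathlib

/-- Morphisms of the category `Rel`: relations between sets. -/
def Rl (A B : Type) := A → B → Prop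

/-- Composition of relations. -/
def rcomp {A B C : Type} (R : Rl A B) (S : Rl B C) : Rl A C :=
  fun a c => ∃ b, R a b ∧ S b c

/-- Identity relation. -/
def idRl (A : Type) : Rl A A := fun a b => a = b

/-- Tensor product of relations: disjoint union. -/
def sumRl {A B C D : Type} (R : Rl A B) (S : Rl C D) : Rl (A ⊕ C) (B ⊕ D) :=
  fun x y => match x, y with
  | Sum.inl a, Sum.inl b => R a b
  | Sum.inr c, Sum.inr d => S c d
  | _, _ => False

/-- The symmetry `A ⊕ B → B ⊕ A` as a relation. -/
def swapRl (A B : Type) : Rl (A ⊕ B) (B ⊕ A) :=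
  fun x y => match x, y with
  | Sum.inl a, Sum.inr a' => a = a'
  | Sum.inr b, Sum.inl b' => b = b'
  | _, _ => False

/-- The trace of `R ⊆ (A + X) × (B + X)`:
`Tr^X(R) = {(a,b) : ∃ n ≥ 0, ∃ x₁,…,xₙ ∈ X, a R x₁ R x₂ R … R xₙ R b}`. -/
def trRl {A B X : Type} (R : Rl (A ⊕ X) (B ⊕ X)) : Rl A B :=
  fun a b => R (.inl a) (.inl b) ∨
    ∃ x y, R (.inl a) (.inr x) ∧
      Relation.ReflTransGen (fun u v => R (.inr u) (.inr v)) x y ∧ R (.inr y) (.inl b)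

/-- Conjugation by the associativity isomorphism of disjoint union. -/
def reassocRl {A X Y B X' Y' : Type} (R : Rl (A ⊕ (X ⊕ Y)) (B ⊕ (X' ⊕ Y'))) :
    Rl ((A ⊕ X) ⊕ Y) ((B ⊕ X') ⊕ Y') :=
  fun u v => R (Equiv.sumAssoc A X Y u) (Equiv.sumAssoc B X' Y' v)

open Relation

section SumDecomp
variable {X Y : Type} (r : Rl (X ⊕ Y) (X ⊕ Y))

abbrev ryr : Rl Y Y := fun u v => r (.inr u) (.inr v)

lemma rtg_ry_lift {y y'} (h : ReflTransGen (ryr r) y y') :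
    ReflTransGen r (.inr y) (.inr y') :=
  ReflTransGen.lift Sum.inr (fun _ _ h => h) _ _ h

lemma glue_t {x x'} (h : ReflTransGen (trRl r) x x') :
    ReflTransGen r (.inl x) (.inl x') := by
  induction h with
  | refl => exact .refl
  | tail _ hstep ih =>
    rcases hstep with h1 | ⟨y, y', h1, h2, h3⟩
    · exact ih.tail h1
    · exact ih.trans (((ReflTransGen.single h1).trans (rtg_ry_lift r h2)).tail h3)

def decompP : (X ⊕ Y) → (X ⊕ Y) → Prop
  | .inl x, .inl x' => ReflTransGen (trRl r) x x'
  | .inl x, .inr y => ∃ x' y₀, ReflTransGen (trRl r) x x' ∧ r (.inl x') (.inr y₀) ∧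
      ReflTransGen (ryr r) y₀ y
  | .inr y, .inl x => ∃ y' x₀, ReflTransGen (ryr r) y y' ∧ r (.inr y') (.inl x₀) ∧
      ReflTransGen (trRl r) x₀ x
  | .inr y, .inr y' => ReflTransGen (ryr r) y y' ∨
      ∃ y₀ x₀ x₁ y₁, ReflTransGen (ryr r) y y₀ ∧ r (.inr y₀) (.inl x₀) ∧
        ReflTransGen (trRl r) x₀ x₁ ∧ r (.inl x₁) (.inr y₁) ∧ ReflTransGen (ryr r) y₁ y'

lemma decomp {u v : X ⊕ Y} (h : ReflTransGen r u v) : decompP r u v := by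
  induction h using ReflTransGen.head_induction_on with
  | refl =>
    cases v with
    | inl x => exact ReflTransGen.refl
    | inr y => exact Or.inl ReflTransGen.refl
  | head h1 h2 ih =>
    rename_i u w
    cases u with
    | inl x =>
      cases w with
      | inl x₂ =>
        have hstep : trRl r x x₂ := Or.inl h1
        cases v with
        | inl x' => exact (ih : ReflTransGen (trRl r) x₂ x').head hstep
        | inr y =>
          obtain ⟨x', y₀, p1, p2, p3⟩ := ih
          exact ⟨x', y₀, p1.head hstep, p2, p3⟩
      | inr y₂ =>
        cases v with
        | inl x' =>
          obtain ⟨y', x₀, p1, p2, p3⟩ := ih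
          exact p3.head (Or.inr ⟨y₂, y', h1, p1, p2⟩)
        | inr y =>
          rcases ih with p | ⟨y₀, x₀, x₁, y₁, p1, p2, p3, p4, p5⟩
          · exact ⟨x, y₂, ReflTransGen.refl, h1, p⟩
          · exact ⟨x₁, y₁, p3.head (Or.inr ⟨y₂, y₀, h1, p1, p2⟩), p4, p5⟩
    | inr y =>
      cases w with
      | inl x₂ =>
        cases v with
        | inl x' => exact ⟨y, x₂, ReflTransGen.refl, h1, ih⟩
        | inr y' =>
          obtain ⟨x₁, y₁, p1, p2, p3⟩ := ih
          exact Or.inr ⟨y, x₂, x₁, y₁, ReflTransGen.refl, h1, p1, p2, p3⟩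
      | inr y₂ =>
        cases v with
        | inl x' =>
          obtain ⟨y', x₀, p1, p2, p3⟩ := ih
          exact ⟨y', x₀, p1.head h1, p2, p3⟩
        | inr y' =>
          rcases ih with p | ⟨y₀, x₀, x₁, y₁, p1, p2, p3, p4, p5⟩
          · exact Or.inl (p.head h1)
          · exact Or.inr ⟨y₀, x₀, x₁, y₁, p1.head h1, p2, p3, p4, p5⟩

end SumDecomp

lemma slideRTG {α β : Type} {p : α → β → Prop} {q : β → α → Prop} {a a' : α} {b' : β}
    (h : ReflTransGen (rcomp p q) a a') (hp : p a' b') :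
    ∃ b, p a b ∧ ReflTransGen (rcomp q p) b b' := by
  induction h using ReflTransGen.head_induction_on with
  | refl => exact ⟨b', hp, .refl⟩
  | head h1 _ ih =>
    obtain ⟨b, hab, hq⟩ := h1
    obtain ⟨c, hc1, hc2⟩ := ih
    exact ⟨b, hab, hc2.head ⟨_, hq, hc1⟩⟩

lemma slideRTG' {α β : Type} {p : α → β → Prop} {q : β → α → Prop} {a : α} {b b' : β}
    (hp : p a b) (h : ReflTransGen (rcomp q p) b b') :
    ∃ a', ReflTransGen (rcomp p q) a a' ∧ p a' b' := by
  induction h with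
  | refl => exact ⟨a, .refl, hp⟩
  | tail _ hstep ih =>
    obtain ⟨a', h1, h2⟩ := ih
    obtain ⟨c, hq, hp2⟩ := hstep
    exact ⟨c, h1.tail ⟨_, h2, hq⟩, hp2⟩

lemma tightening {A A' B B' X : Type} (R : Rl (A ⊕ X) (B ⊕ X)) (g : Rl B B') (h : Rl A' A) :
    trRl (rcomp (sumRl h (idRl X)) (rcomp R (sumRl g (idRl X)))) =
      rcomp h (rcomp (trRl R) g) := by
  have hstep : (fun u v : X => rcomp (sumRl h (idRl X)) (rcomp R (sumRl g (idRl X)))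
      (.inr u) (.inr v)) = fun u v => R (.inr u) (.inr v) := by
    funext u v
    apply propext
    constructor
    · rintro ⟨m, hm, n, hn, hv⟩
      rcases m with a | u' <;> rcases n with b | v'
      · exact hm.elim
      · exact hm.elim
      · exact hv.elim
      · exact (hm : u = u') ▸ (hv : v' = v) ▸ hn
    · intro hR
      exact ⟨.inr u, rfl, .inr v, hR, rfl⟩
  funext a' b'
  apply propext
  constructor
  · rintro (⟨m, hm, n, hn, hv⟩ | ⟨x, y, ⟨m, hm, n, hn, hv⟩, hrtg, ⟨m2, hm2, n2, hn2, hv2⟩⟩)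
    · rcases m with a | x
      · rcases n with b | x
        · exact ⟨a, hm, b, Or.inl hn, hv⟩
        · exact hv.elim
      · exact hm.elim
    · rw [hstep] at hrtg
      rcases m with a | x0; swap; · exact hm.elim
      rcases n with b | x'; · exact hv.elim
      rcases m2 with a2 | y'; · exact hm2.elim
      rcases n2 with b | x2; swap; · exact hv2.elim
      exact ⟨a, hm, b, Or.inr ⟨x, y', (hv : x' = x) ▸ hn,
        (hm2 : y = y') ▸ hrtg, hn2⟩, hv2⟩
  · rintro ⟨a, ha, b, hab, hg⟩
    rcases hab with h1 | ⟨x, y, h1, h2, h3⟩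
    · exact Or.inl ⟨.inl a, ha, .inl b, h1, hg⟩
    · refine Or.inr ⟨x, y, ⟨.inl a, ha, .inr x, h1, rfl⟩, ?_, ⟨.inr y, rfl, .inl b, h3, hg⟩⟩
      rw [hstep]; exact h2

lemma sliding {A B X Y : Type} (R : Rl (A ⊕ X) (B ⊕ Y)) (g : Rl Y X) :
    trRl (rcomp (sumRl (idRl A) g) R) = trRl (rcomp R (sumRl (idRl B) g)) := by
  have hL : (fun u v : Y => rcomp (sumRl (idRl A) g) R (.inr u) (.inr v)) =
      rcomp g (fun x v => R (.inr x) (.inr v)) := by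
    funext u v; apply propext
    constructor
    · rintro ⟨m, hm, hR⟩
      rcases m with a | x
      · exact hm.elim
      · exact ⟨x, hm, hR⟩
    · rintro ⟨x, hg, hR⟩
      exact ⟨.inr x, hg, hR⟩
  have hRr : (fun u v : X => rcomp R (sumRl (idRl B) g) (.inr u) (.inr v)) =
      rcomp (fun x y => R (.inr x) (.inr y)) g := by
    funext u v; apply propext
    constructor
    · rintro ⟨n, hR, hn⟩
      rcases n with b | y
      · exact hn.elim
      · exact ⟨y, hR, hn⟩
    · rintro ⟨y, hR, hg⟩
      exact ⟨.inr y, hR, hg⟩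
  funext a b
  apply propext
  constructor
  · rintro (⟨m, hm, hR⟩ | ⟨y, y', ⟨m, hm, hR⟩, h2, ⟨m2, hm2, hR2⟩⟩)
    · rcases m with a' | x; swap; · exact hm.elim
      exact Or.inl ⟨.inl b, (hm : a = a') ▸ hR, rfl⟩
    · rcases m with a' | x; swap; · exact hm.elim
      rcases m2 with a2 | x''; · exact hm2.elim
      rw [hL] at h2
      obtain ⟨x₀, hg₀, h2'⟩ := slideRTG h2 hm2
      refine Or.inr ⟨x₀, x'', ⟨.inr y, (hm : a = a') ▸ hR, hg₀⟩, ?_, ⟨.inl b, hR2, rfl⟩⟩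
      rw [hRr]; exact h2'
  · rintro (⟨n, hR, hn⟩ | ⟨x, x', ⟨n, hR, hn⟩, h2, ⟨n2, hR2, hn2⟩⟩)
    · rcases n with b' | y; swap; · exact hn.elim
      exact Or.inl ⟨.inl a, rfl, (hn : b' = b) ▸ hR⟩
    · rcases n with b' | y₀; · exact hn.elim
      rcases n2 with b' | y2; swap; · exact hn2.elim
      rw [hRr] at h2
      obtain ⟨y', h2', hg'⟩ := slideRTG' (p := g) (q := fun x y => R (.inr x) (.inr y)) (hn : g y₀ x) h2
      refine Or.inr ⟨y₀, y', ⟨.inl a, rfl, hR⟩, ?_, ⟨.inr x', hg', (hn2 : b' = b) ▸ hR2⟩⟩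
      rw [hL]; exact h2'

lemma vanishing_unit {A B : Type} (R : Rl (A ⊕ Empty) (B ⊕ Empty)) (a : A) (b : B) :
    trRl R a b ↔ R (.inl a) (.inl b) := by
  constructor
  · rintro (h | ⟨x, _, _⟩)
    · exact h
    · exact x.elim
  · exact Or.inl

lemma vanishing_tensor {A B X Y : Type} (R : Rl (A ⊕ (X ⊕ Y)) (B ⊕ (X ⊕ Y))) :
    trRl R = trRl (trRl (reassocRl R)) := by
  set r : Rl (X ⊕ Y) (X ⊕ Y) := fun u v => R (.inr u) (.inr v) with hr
  funext a b
  apply propext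
  constructor
  · rintro (h | ⟨z, w, h1, h2, h3⟩)
    · exact Or.inl (Or.inl h)
    · have hd := decomp r h2
      rcases z with x | y <;> rcases w with x' | y'
      · exact Or.inr ⟨x, x', Or.inl h1, hd, Or.inl h3⟩
      · obtain ⟨x', y₀, p1, p2, p3⟩ := hd
        exact Or.inr ⟨x, x', Or.inl h1, p1, Or.inr ⟨y₀, y', p2, p3, h3⟩⟩
      · obtain ⟨y'', x₀, p1, p2, p3⟩ := hd
        exact Or.inr ⟨x₀, x', Or.inr ⟨y, y'', h1, p1, p2⟩, p3, Or.inl h3⟩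
      · rcases hd with p | ⟨y₀, x₀, x₁, y₁, p1, p2, p3, p4, p5⟩
        · exact Or.inl (Or.inr ⟨y, y', h1, p, h3⟩)
        · exact Or.inr ⟨x₀, x₁, Or.inr ⟨y, y₀, h1, p1, p2⟩, p3,
            Or.inr ⟨y₁, y', p4, p5, h3⟩⟩
  · rintro (h | ⟨x, x', h1, h2, h3⟩)
    · rcases h with h' | ⟨y, y', q1, q2, q3⟩
      · exact Or.inl h'
      · exact Or.inr ⟨.inr y, .inr y', q1, rtg_ry_lift r q2, q3⟩
    · have mid : ReflTransGen r (.inl x) (.inl x') := glue_t r h2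
      rcases h1 with q | ⟨y, y₀, q1, q2, q3⟩
      · rcases h3 with q' | ⟨y₁, y₂, q1', q2', q3'⟩
        · exact Or.inr ⟨.inl x, .inl x', q, mid, q'⟩
        · exact Or.inr ⟨.inl x, .inr y₂, q,
            mid.trans ((ReflTransGen.single q1').trans (rtg_ry_lift r q2')), q3'⟩
      · have pre : ReflTransGen r (.inr y) (.inl x) := (rtg_ry_lift r q2).tail q3
        rcases h3 with q' | ⟨y₁, y₂, q1', q2', q3'⟩
        · exact Or.inr ⟨.inr y, .inl x', q1, pre.trans mid, q'⟩
        · exact Or.inr ⟨.inr y, .inr y₂, q1,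
            (pre.trans mid).trans ((ReflTransGen.single q1').trans (rtg_ry_lift r q2')), q3'⟩

lemma strength {A B C D X : Type} (S : Rl C D) (R : Rl (A ⊕ X) (B ⊕ X)) :
    trRl (reassocRl (sumRl S R)) = sumRl S (trRl R) := by
  funext p q
  apply propext
  rcases p with c | a <;> rcases q with d | b
  · constructor
    · rintro (h | ⟨x, y, h1, _, _⟩)
      · exact h
      · exact h1.elim
    · exact Or.inl
  · constructor
    · rintro (h | ⟨x, y, h1, _, _⟩)
      · exact h.elim
      · exact h1.elim
    · exact False.elim
  · constructor
    · rintro (h | ⟨x, y, _, _, h3⟩)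
      · exact h.elim
      · exact h3.elim
    · exact False.elim
  · exact Iff.rfl

lemma yanking (X : Type) : trRl (swapRl X X) = idRl X := by
  funext x y
  apply propext
  constructor
  · rintro (h | ⟨x', y', h1, h2, h3⟩)
    · exact h.elim
    · have : x' = y' := by
        rcases h2.cases_head with h | ⟨c, hc, _⟩
        · exact h
        · exact hc.elim
      exact ((h1 : x = x').trans this).trans (h3 : y' = y)
  · rintro rfl
    exact Or.inr ⟨x, x, rfl, .refl, rfl⟩

/-- `Rel` with disjoint union and the iterative trace is a symmetric traced category:
the trace satisfies tightening, sliding, vanishing, strength, and yanking. -/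
theorem rel_symmetric_traced :
    -- tightening (naturality in `A` and `B`)
    (∀ {A A' B B' X : Type} (R : Rl (A ⊕ X) (B ⊕ X)) (g : Rl B B') (h : Rl A' A),
      trRl (rcomp (sumRl h (idRl X)) (rcomp R (sumRl g (idRl X)))) =
        rcomp h (rcomp (trRl R) g)) ∧
    -- sliding (dinaturality in `X`)
    (∀ {A B X Y : Type} (R : Rl (A ⊕ X) (B ⊕ Y)) (g : Rl Y X),
      trRl (rcomp (sumRl (idRl A) g) R) = trRl (rcomp R (sumRl (idRl B) g))) ∧
    -- vanishing, unit case: `Tr^∅ R = R`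
    (∀ {A B : Type} (R : Rl (A ⊕ Empty) (B ⊕ Empty)) (a : A) (b : B),
      trRl R a b ↔ R (.inl a) (.inl b)) ∧
    -- vanishing, tensor case: `Tr^{X+Y} R = Tr^X (Tr^Y R)`
    (∀ {A B X Y : Type} (R : Rl (A ⊕ (X ⊕ Y)) (B ⊕ (X ⊕ Y))),
      trRl R = trRl (trRl (reassocRl R))) ∧
    -- strength (superposing): `Tr^X (S + R) = S + Tr^X R`
    (∀ {A B C D X : Type} (S : Rl C D) (R : Rl (A ⊕ X) (B ⊕ X)),
      trRl (reassocRl (sumRl S R)) = sumRl S (trRl R)) ∧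
    -- yanking: the trace of the symmetry on `X + X` is the identity on `X`
    (∀ X : Type, trRl (swapRl X X) = idRl X) :=
  ⟨@tightening, @sliding, @vanishing_unit, @vanishing_tensor, @strength, yanking⟩
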